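/- Let η > 0, let I be a finite nonempty index set, and let A_i ⊆ ℝ² (i ∈ I) be finite sets whose union is A = ⋃_{i∈I} A_i; assume moreover that A = ⋃_{i∈I} A_i^∁, where A_i^∁ := A \ A_i. For each i let 𝒞_i be the maximal optimal partition of (A_i^∁, η), and let 𝒞 be the maximal optimal partition of (A, η). Then every cluster C ∈ 𝒞 either is a cluster of some partition 𝒞_i (i.e. C ∈ 𝒞_i for some i ∈ I) or has nonempty intersection with every set A_i (i ∈ I). -/

import Mathlib

noncomputable section

/-- The Euclidean plane. -/
abbrev Plane := EuclideanSpace ℝ (Fin 2)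

/-- Perimeter of a bounded set via Cauchy's formula. -/
noncomputable def perim (C : Set Plane) : ℝ :=
  ∫ θ in (0:ℝ)..(2 * Real.pi),
    sSup ((fun p : Plane => p 0 * Real.cos θ + p 1 * Real.sin θ) '' C)

/-- `P` is a partition of `A` into nonempty clusters. -/
def IsPartition (A : Set Plane) (P : Finset (Set Plane)) : Prop :=
  (∀ C ∈ P, (C : Set Plane).Nonempty) ∧
  (⋃₀ (P : Set (Set Plane)) = A) ∧
  ((P : Set (Set Plane)).PairwiseDisjoint id)

/-- Cost of a partition with opening cost `η` per cluster. -/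
noncomputable def cost (η : ℝ) (P : Finset (Set Plane)) : ℝ :=
  η * P.card + ∑ C ∈ P, perim C

/-- `P` is an optimal partition for `(A, η)`. -/
def IsOptimalPartition (η : ℝ) (A : Set Plane) (P : Finset (Set Plane)) : Prop :=
  IsPartition A P ∧ ∀ Q : Finset (Set Plane), IsPartition A Q → cost η P ≤ cost η Q

/-- `A` is indivisible for `η`: the one-block partition `{A}` is optimal. -/
def Indivisible (η : ℝ) (A : Set Plane) : Prop :=
  IsOptimalPartition η A {A}

/-- A maximal optimal partition of `(A, η)`. -/
def IsMaximalOptimal (η : ℝ) (A : Set Plane) (P : Finset (Set Plane)) : Prop :=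
  IsOptimalPartition η A P ∧
  ¬ ∃ Q : Finset (Set Plane), IsOptimalPartition η A Q ∧ Q.card < P.card ∧
      ∀ C ∈ P, ∃ C' ∈ Q, C ⊆ C'

noncomputable def sf (S : Set Plane) (θ : ℝ) : ℝ :=
  sSup ((fun p : Plane => p 0 * Real.cos θ + p 1 * Real.sin θ) '' S)

lemma perim_eq (C : Set Plane) : perim C = ∫ θ in (0:ℝ)..(2 * Real.pi), sf C θ := rfl

lemma cont_sup' (s : Finset Plane) (hs : s.Nonempty) :
    Continuous (fun θ : ℝ => s.sup' hs fun p => p 0 * Real.cos θ + p 1 * Real.sin θ) := by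
  induction hs using Finset.Nonempty.cons_induction with
  | singleton a =>
      simp only [Finset.sup'_singleton]
      exact ((continuous_const.mul Real.continuous_cos).add
        (continuous_const.mul Real.continuous_sin))
  | cons a s ha hs ih =>
      simp only [Finset.sup'_cons hs]
      exact Continuous.max ((continuous_const.mul Real.continuous_cos).add
        (continuous_const.mul Real.continuous_sin)) ih

lemma sf_cont {S : Set Plane} (h1 : S.Finite) (h2 : S.Nonempty) : Continuous (sf S) := by
  classical
  have hne' : h1.toFinset.Nonempty := by simpa using h2
  have key : sf S = fun θ => h1.toFinset.sup' hne'
      (fun p => p 0 * Real.cos θ + p 1 * Real.sin θ) := by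
    funext θ
    rw [Finset.sup'_eq_csSup_image]
    simp [sf, h1.coe_toFinset]
  rw [key]; exact cont_sup' _ _

lemma sf_integrable {S : Set Plane} (h1 : S.Finite) (h2 : S.Nonempty) :
    IntervalIntegrable (sf S) MeasureTheory.volume 0 (2 * Real.pi) :=
  (sf_cont h1 h2).intervalIntegrable _ _

lemma sf_mono {S T : Set Plane} (hT : T.Finite) (hS : S.Nonempty) (hsub : S ⊆ T) (θ : ℝ) :
    sf S θ ≤ sf T θ :=
  csSup_le_csSup ((hT.image _).bddAbove) ((hS.image _)) (Set.image_mono hsub)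

lemma sf_key (C : Set Plane) (hCf : C.Finite) (K : Finset (Set Plane))
    (hfin : ∀ D ∈ K, (D : Set Plane).Finite) (hne : ∀ D ∈ K, (D ∩ C).Nonempty)
    (hKne : K.Nonempty) (θ : ℝ) :
    sf (⋃₀ (K : Set (Set Plane))) θ + ∑ D ∈ K, sf (D ∩ C) θ
      ≤ sf C θ + ∑ D ∈ K, sf D θ := by
  classical
  set g : Plane → ℝ := fun p => p 0 * Real.cos θ + p 1 * Real.sin θ with hg
  have hUf : (⋃₀ (K : Set (Set Plane))).Finite :=
    Set.Finite.sUnion K.finite_toSet (by simpa using hfin)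
  have hUne : (⋃₀ (K : Set (Set Plane))).Nonempty := by
    obtain ⟨D, hD⟩ := hKne
    obtain ⟨x, hx⟩ := hne D hD
    exact ⟨x, Set.mem_sUnion.2 ⟨D, by simpa using hD, hx.1⟩⟩
  -- the sup over the union is attained in some D₀ ∈ K
  have hmem : sSup (g '' ⋃₀ (K : Set (Set Plane))) ∈ g '' ⋃₀ (K : Set (Set Plane)) :=
    Set.Nonempty.csSup_mem (hUne.image g) (hUf.image g)
  obtain ⟨p, hpU, hgp⟩ := hmem
  obtain ⟨D₀, hD₀K, hpD₀⟩ := Set.mem_sUnion.1 hpU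
  have hD₀K' : D₀ ∈ K := by simpa using hD₀K
  have h1 : sf (⋃₀ (K : Set (Set Plane))) θ ≤ sf D₀ θ := by
    rw [show sf (⋃₀ (K : Set (Set Plane))) θ = g p from hgp.symm]
    exact le_csSup (((hfin D₀ hD₀K').image g).bddAbove) ⟨p, hpD₀, rfl⟩
  have h2 : sf (D₀ ∩ C) θ ≤ sf C θ :=
    sf_mono hCf (hne D₀ hD₀K') Set.inter_subset_right θ
  have h3 : ∑ D ∈ K.erase D₀, sf (D ∩ C) θ ≤ ∑ D ∈ K.erase D₀, sf D θ := by
    refine Finset.sum_le_sum fun D hD => ?_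
    have hDK : D ∈ K := Finset.mem_of_mem_erase hD
    exact sf_mono (hfin D hDK) (hne D hDK) Set.inter_subset_left θ
  have e1 : sf (D₀ ∩ C) θ + ∑ D ∈ K.erase D₀, sf (D ∩ C) θ = ∑ D ∈ K, sf (D ∩ C) θ :=
    Finset.add_sum_erase K (fun D => sf (D ∩ C) θ) hD₀K'
  have e2 : sf D₀ θ + ∑ D ∈ K.erase D₀, sf D θ = ∑ D ∈ K, sf D θ :=
    Finset.add_sum_erase K (fun D => sf D θ) hD₀K'
  linarith

set_option maxHeartbeats 1000000 in
lemma perim_key (C : Set Plane) (hCf : C.Finite) (K : Finset (Set Plane))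
    (hfin : ∀ D ∈ K, (D : Set Plane).Finite) (hne : ∀ D ∈ K, (D ∩ C).Nonempty)
    (hKne : K.Nonempty) :
    perim (⋃₀ (K : Set (Set Plane))) + ∑ D ∈ K, perim (D ∩ C)
      ≤ perim C + ∑ D ∈ K, perim D := by
  classical
  have hCne : C.Nonempty := by
    obtain ⟨D, hD⟩ := hKne; obtain ⟨x, hx⟩ := hne D hD; exact ⟨x, hx.2⟩
  have hUf : (⋃₀ (K : Set (Set Plane))).Finite :=
    Set.Finite.sUnion K.finite_toSet (by simpa using hfin)
  have hUne : (⋃₀ (K : Set (Set Plane))).Nonempty := by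
    obtain ⟨D, hD⟩ := hKne
    obtain ⟨x, hx⟩ := hne D hD
    exact ⟨x, Set.mem_sUnion.2 ⟨D, by simpa using hD, hx.1⟩⟩
  have hDne : ∀ D ∈ K, (D : Set Plane).Nonempty := fun D hD =>
    ((hne D hD).mono Set.inter_subset_left)
  have hint1 : IntervalIntegrable (fun θ => sf (⋃₀ (K : Set (Set Plane))) θ
      + ∑ D ∈ K, sf (D ∩ C) θ) MeasureTheory.volume 0 (2 * Real.pi) := by
    refine (sf_integrable hUf hUne).add ?_
    have : Continuous fun θ => ∑ D ∈ K, sf (D ∩ C) θ :=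
      continuous_finset_sum _ fun D hD =>
        sf_cont ((hfin D hD).inter_of_left C) (hne D hD)
    exact this.intervalIntegrable _ _
  have hint2 : IntervalIntegrable (fun θ => sf C θ + ∑ D ∈ K, sf D θ)
      MeasureTheory.volume 0 (2 * Real.pi) := by
    refine (sf_integrable hCf hCne).add ?_
    have : Continuous fun θ => ∑ D ∈ K, sf D θ :=
      continuous_finset_sum _ fun D hD => sf_cont (hfin D hD) (hDne D hD)
    exact this.intervalIntegrable _ _
  have hmono : (∫ θ in (0:ℝ)..(2*Real.pi), (sf (⋃₀ (K : Set (Set Plane))) θ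
        + ∑ D ∈ K, sf (D ∩ C) θ))
      ≤ ∫ θ in (0:ℝ)..(2*Real.pi), (sf C θ + ∑ D ∈ K, sf D θ) := by
    refine intervalIntegral.integral_mono_on (by positivity) hint1 hint2 ?_
    intro θ _
    exact sf_key C hCf K hfin hne hKne θ
  have hintsum1 : IntervalIntegrable (fun θ => ∑ D ∈ K, sf (D ∩ C) θ)
      MeasureTheory.volume 0 (2 * Real.pi) :=
    (continuous_finset_sum _ fun D hD =>
      sf_cont ((hfin D hD).inter_of_left C) (hne D hD)).intervalIntegrable _ _
  have hintsum2 : IntervalIntegrable (fun θ => ∑ D ∈ K, sf D θ)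
      MeasureTheory.volume 0 (2 * Real.pi) :=
    (continuous_finset_sum _ fun D hD =>
      sf_cont (hfin D hD) (hDne D hD)).intervalIntegrable _ _
  have hsum1 : (∫ θ in (0:ℝ)..(2*Real.pi), ∑ D ∈ K, sf (D ∩ C) θ)
      = ∑ D ∈ K, perim (D ∩ C) := by
    rw [intervalIntegral.integral_finset_sum fun D hD =>
      sf_integrable ((hfin D hD).inter_of_left C) (hne D hD)]
    exact Finset.sum_congr rfl fun D _ => (perim_eq _).symm
  have hsum2 : (∫ θ in (0:ℝ)..(2*Real.pi), ∑ D ∈ K, sf D θ) = ∑ D ∈ K, perim D := by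
    rw [intervalIntegral.integral_finset_sum fun D hD =>
      sf_integrable (hfin D hD) (hDne D hD)]
    exact Finset.sum_congr rfl fun D _ => (perim_eq _).symm
  have e1 : (∫ θ in (0:ℝ)..(2*Real.pi), (sf (⋃₀ (K : Set (Set Plane))) θ
        + ∑ D ∈ K, sf (D ∩ C) θ))
      = perim (⋃₀ (K : Set (Set Plane))) + ∑ D ∈ K, perim (D ∩ C) := by
    have h := intervalIntegral.integral_add (sf_integrable hUf hUne) hintsum1
    rw [h, hsum1, ← perim_eq]
  have e2 : (∫ θ in (0:ℝ)..(2*Real.pi), (sf C θ + ∑ D ∈ K, sf D θ))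
      = perim C + ∑ D ∈ K, perim D := by
    have h := intervalIntegral.integral_add (sf_integrable hCf hCne) hintsum2
    rw [h, hsum2, ← perim_eq]
  rw [e1, e2] at hmono
  exact hmono

lemma mem_subset_of_partition {A : Set Plane} {P : Finset (Set Plane)}
    (hP : IsPartition A P) {E : Set Plane} (hE : E ∈ P) : E ⊆ A := by
  rw [← hP.2.1]
  exact Set.subset_sUnion_of_mem (by simpa using hE)

/-- Each cluster of an optimal partition is indivisible. -/
lemma indivisible_of_mem_opt {η : ℝ} {A : Set Plane} {P : Finset (Set Plane)}
    (hopt : IsOptimalPartition η A P) {C : Set Plane} (hC : C ∈ P) :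
    Indivisible η C := by
  classical
  obtain ⟨⟨hne, hun, hdis⟩, hmin⟩ := hopt
  have hCne : C.Nonempty := hne C hC
  constructor
  · exact ⟨by simpa using hCne, by simp, by simp⟩
  intro Q hQ
  obtain ⟨hQne, hQun, hQdis⟩ := hQ
  -- members of Q are nonempty subsets of C
  have hQsub : ∀ F ∈ Q, F ⊆ C := fun F hF => by
    rw [← hQun]; exact Set.subset_sUnion_of_mem (by simpa using hF)
  -- Q is disjoint from P.erase C as finsets
  have hdisj : Disjoint (P.erase C) Q := by
    rw [Finset.disjoint_left]
    intro E hEP hEQ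
    have hEP' : E ∈ P := Finset.mem_of_mem_erase hEP
    have hEC : E ≠ C := Finset.ne_of_mem_erase hEP
    have : Disjoint E C := hdis (by simpa using hEP') (by simpa using hC) hEC
    obtain ⟨x, hx⟩ := hQne E hEQ
    exact Set.disjoint_left.1 this hx (hQsub E hEQ hx)
  set R : Finset (Set Plane) := (P.erase C) ∪ Q with hR
  have hRpart : IsPartition A R := by
    refine ⟨?_, ?_, ?_⟩
    · intro E hE
      rcases Finset.mem_union.1 hE with h | h
      · exact hne E (Finset.mem_of_mem_erase h)
      · exact hQne E h
    · rw [hR, Finset.coe_union, Set.sUnion_union, hQun]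
      apply Set.Subset.antisymm
      · apply Set.union_subset
        · apply Set.sUnion_subset
          intro E hE
          exact mem_subset_of_partition ⟨hne, hun, hdis⟩
            (Finset.mem_of_mem_erase (Finset.mem_coe.1 hE))
        · exact mem_subset_of_partition ⟨hne, hun, hdis⟩ hC
      · intro x hx
        rw [← hun] at hx
        obtain ⟨E, hE, hxE⟩ := hx
        have hE' : E ∈ P := Finset.mem_coe.1 hE
        by_cases hEC : E = C
        · exact Or.inr (hEC ▸ hxE)
        · exact Or.inl ⟨E, Finset.mem_coe.2 (Finset.mem_erase.2 ⟨hEC, hE'⟩), hxE⟩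
    · intro E hE F hF hEF
      have hE2 := Finset.mem_union.1 (Finset.mem_coe.1 hE)
      have hF2 := Finset.mem_union.1 (Finset.mem_coe.1 hF)
      clear hE hF
      rcases hE2 with hE | hE <;> rcases hF2 with hF | hF
      · exact hdis (Finset.mem_coe.2 (Finset.mem_of_mem_erase hE))
          (Finset.mem_coe.2 (Finset.mem_of_mem_erase hF)) hEF
      · have hE' : (E : Set Plane) ∈ (P : Set (Set Plane)) :=
          Finset.mem_coe.2 (Finset.mem_of_mem_erase hE)
        have hEC : E ≠ C := Finset.ne_of_mem_erase hE
        have hdisEC : Disjoint E C := hdis hE' (Finset.mem_coe.2 hC) hEC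
        exact hdisEC.mono_right (hQsub F hF)
      · have hF' : (F : Set Plane) ∈ (P : Set (Set Plane)) :=
          Finset.mem_coe.2 (Finset.mem_of_mem_erase hF)
        have hFC : F ≠ C := Finset.ne_of_mem_erase hF
        have hdisFC : Disjoint F C := hdis hF' (Finset.mem_coe.2 hC) hFC
        exact (hdisFC.mono_right (hQsub E hE)).symm
      · exact hQdis (Finset.mem_coe.2 hE) (Finset.mem_coe.2 hF) hEF
  have hcost := hmin R hRpart
  have hcard : (R.card : ℝ) = (P.erase C).card + Q.card := by
    rw [hR, Finset.card_union_of_disjoint hdisj]; push_cast; ring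
  have hPcard : (P.card : ℝ) = (P.erase C).card + 1 := by
    rw [← Finset.card_erase_add_one hC]; push_cast; ring
  have hsumR : ∑ E ∈ R, perim E = ∑ E ∈ P.erase C, perim E + ∑ E ∈ Q, perim E := by
    rw [hR, Finset.sum_union hdisj]
  have hsumP : ∑ E ∈ P, perim E = perim C + ∑ E ∈ P.erase C, perim E :=
    (Finset.add_sum_erase P perim hC).symm
  have h1 : cost η P = η * ((P.erase C).card + 1) + (perim C + ∑ E ∈ P.erase C, perim E) := by
    rw [cost, hPcard, hsumP]
  have h2 : cost η R = η * ((P.erase C).card + Q.card)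
      + (∑ E ∈ P.erase C, perim E + ∑ E ∈ Q, perim E) := by
    rw [cost, hcard, hsumR]
  have hQcost : cost η Q = η * Q.card + ∑ E ∈ Q, perim E := rfl
  have hfinal : cost η ({C} : Finset (Set Plane)) = η * 1 + perim C := by
    rw [cost]; simp
  rw [h1, h2] at hcost
  rw [hfinal, hQcost]
  linarith

/-- Merging a subfamily of a maximal optimal partition whose union has small
perimeter is impossible. -/
lemma no_cheap_merge {η : ℝ} {A : Set Plane} {P : Finset (Set Plane)}
    (hmax : IsMaximalOptimal η A P) (K : Finset (Set Plane)) (hKP : K ⊆ P)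
    (hK2 : 2 ≤ K.card)
    (hU : perim (⋃₀ (K : Set (Set Plane))) ≤ η * ((K.card : ℝ) - 1) + ∑ D ∈ K, perim D) :
    False := by
  classical
  obtain ⟨⟨⟨hne, hun, hdis⟩, hmin⟩, hnex⟩ := hmax
  set U : Set Plane := ⋃₀ (K : Set (Set Plane)) with hUdef
  have hKne : K.Nonempty := Finset.card_pos.1 (by omega)
  obtain ⟨D₁, hD₁⟩ := hKne
  have hD₁ne : D₁.Nonempty := hne D₁ (hKP hD₁)
  have hD₁U : D₁ ⊆ U := Set.subset_sUnion_of_mem (Finset.mem_coe.2 hD₁)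
  have hUne : U.Nonempty := hD₁ne.mono hD₁U
  have hUnotin : U ∉ P \ K := by
    intro hUin
    obtain ⟨hUP, hUK⟩ := Finset.mem_sdiff.1 hUin
    have hUD₁ : U ≠ D₁ := fun h => hUK (h ▸ hD₁)
    have := hdis (Finset.mem_coe.2 hUP) (Finset.mem_coe.2 (hKP hD₁)) hUD₁
    obtain ⟨x, hx⟩ := hD₁ne
    exact Set.disjoint_left.1 this (hD₁U hx) hx
  set Q : Finset (Set Plane) := (P \ K) ∪ {U} with hQdef
  have hQpart : IsPartition A Q := by
    refine ⟨?_, ?_, ?_⟩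
    · intro E hE
      rcases Finset.mem_union.1 hE with h | h
      · exact hne E (Finset.mem_sdiff.1 h).1
      · rw [Finset.mem_singleton.1 h]; exact hUne
    · rw [hQdef, Finset.coe_union, Set.sUnion_union]
      simp only [Finset.coe_singleton, Set.sUnion_singleton]
      apply Set.Subset.antisymm
      · apply Set.union_subset
        · apply Set.sUnion_subset
          intro E hE
          exact mem_subset_of_partition ⟨hne, hun, hdis⟩ (Finset.mem_sdiff.1 hE).1
        · rw [hUdef]
          apply Set.sUnion_subset
          intro D hD
          exact mem_subset_of_partition ⟨hne, hun, hdis⟩ (hKP (Finset.mem_coe.1 hD))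
      · intro x hx
        rw [← hun] at hx
        obtain ⟨E, hE, hxE⟩ := hx
        have hE' : E ∈ P := Finset.mem_coe.1 hE
        by_cases hEK : E ∈ K
        · exact Or.inr ⟨E, Finset.mem_coe.2 hEK, hxE⟩
        · exact Or.inl ⟨E, Finset.mem_coe.2 (Finset.mem_sdiff.2 ⟨hE', hEK⟩), hxE⟩
    · intro E hE F hF hEF
      have hE2 := Finset.mem_union.1 (Finset.mem_coe.1 hE)
      have hF2 := Finset.mem_union.1 (Finset.mem_coe.1 hF)
      clear hE hF
      have hdisU : ∀ E' ∈ P \ K, Disjoint E' U := by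
        intro E' hE'
        obtain ⟨hE'P, hE'K⟩ := Finset.mem_sdiff.1 hE'
        rw [hUdef]
        rw [Set.disjoint_sUnion_right]
        intro D hD
        have hDK : D ∈ K := Finset.mem_coe.1 hD
        exact hdis (Finset.mem_coe.2 hE'P) (Finset.mem_coe.2 (hKP hDK))
          (fun h => hE'K (h ▸ hDK))
      rcases hE2 with hE | hE <;> rcases hF2 with hF | hF
      · exact hdis (Finset.mem_coe.2 (Finset.mem_sdiff.1 hE).1)
          (Finset.mem_coe.2 (Finset.mem_sdiff.1 hF).1) hEF
      · rw [Finset.mem_singleton.1 hF]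
        exact hdisU E hE
      · rw [Finset.mem_singleton.1 hE]
        exact (hdisU F hF).symm
      · rw [Finset.mem_singleton.1 hE, Finset.mem_singleton.1 hF] at hEF
        exact absurd rfl hEF
  -- cost comparison
  have hQcard : Q.card = (P \ K).card + 1 := by
    rw [hQdef, Finset.card_union_of_disjoint (Finset.disjoint_singleton_right.2 hUnotin)]
    simp
  have hPKcard : (P \ K).card + K.card = P.card := Finset.card_sdiff_add_card_eq_card hKP
  have hsumP : ∑ E ∈ P, perim E = ∑ E ∈ P \ K, perim E + ∑ E ∈ K, perim E :=
    (Finset.sum_sdiff hKP).symm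
  have hsumQ : ∑ E ∈ Q, perim E = ∑ E ∈ P \ K, perim E + perim U := by
    rw [hQdef, Finset.sum_union (Finset.disjoint_singleton_right.2 hUnotin)]
    simp
  have hcostQ : cost η Q ≤ cost η P := by
    rw [cost, cost, hsumQ, hsumP, hQcard]
    have : ((P.card : ℝ)) = (P \ K).card + K.card := by
      rw [← hPKcard]; push_cast; ring
    rw [this]
    push_cast
    have hK2' : (2 : ℝ) ≤ (K.card : ℝ) := by exact_mod_cast hK2
    nlinarith [hU]
  have hQopt : IsOptimalPartition η A Q :=
    ⟨hQpart, fun R hR => le_trans hcostQ (hmin R hR)⟩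
  apply hnex
  refine ⟨Q, hQopt, ?_, ?_⟩
  · rw [hQcard, ← hPKcard]; omega
  · intro E hEP
    by_cases hEK : E ∈ K
    · exact ⟨U, Finset.mem_union_right _ (Finset.mem_singleton_self U),
        Set.subset_sUnion_of_mem (Finset.mem_coe.2 hEK)⟩
    · exact ⟨E, Finset.mem_union_left _ (Finset.mem_sdiff.2 ⟨hEP, hEK⟩),
        Set.Subset.rfl⟩

/-- An indivisible subset of `A` is absorbed in a single cluster of any maximal
optimal partition of `A`. -/
lemma absorb {η : ℝ} {A : Set Plane} {P : Finset (Set Plane)}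
    (hmax : IsMaximalOptimal η A P) (hAfin : A.Finite)
    {C : Set Plane} (hCne : C.Nonempty) (hCA : C ⊆ A) (hCind : Indivisible η C) :
    ∃ E ∈ P, C ⊆ E ∧ ∀ F ∈ P, (F ∩ C).Nonempty → F = E := by
  classical
  obtain ⟨⟨hne, hun, hdis⟩, hmin⟩ := hmax.1
  have hCf : C.Finite := hAfin.subset hCA
  set K : Finset (Set Plane) := P.filter (fun D => (D ∩ C).Nonempty) with hKdef
  have hKP : K ⊆ P := Finset.filter_subset _ _
  have hKfin : ∀ D ∈ K, (D : Set Plane).Finite := fun D hD =>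
    hAfin.subset (mem_subset_of_partition ⟨hne, hun, hdis⟩ (hKP hD))
  have hKint : ∀ D ∈ K, (D ∩ C).Nonempty := fun D hD => (Finset.mem_filter.1 hD).2
  obtain ⟨x₀, hx₀⟩ := hCne
  have hx₀A : x₀ ∈ A := hCA hx₀
  rw [← hun] at hx₀A
  obtain ⟨E₀, hE₀, hx₀E₀⟩ := hx₀A
  have hE₀K : E₀ ∈ K :=
    Finset.mem_filter.2 ⟨Finset.mem_coe.1 hE₀, ⟨x₀, hx₀E₀, hx₀⟩⟩
  have hKne : K.Nonempty := ⟨E₀, hE₀K⟩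
  have hCsub : C ⊆ ⋃₀ (K : Set (Set Plane)) := by
    intro x hx
    have : x ∈ A := hCA hx
    rw [← hun] at this
    obtain ⟨E, hE, hxE⟩ := this
    exact ⟨E, Finset.mem_coe.2
      (Finset.mem_filter.2 ⟨Finset.mem_coe.1 hE, ⟨x, hxE, hx⟩⟩), hxE⟩
  -- card K = 1
  have hK1 : K.card = 1 := by
    by_contra hcard
    have hK2 : 2 ≤ K.card := by
      have : 1 ≤ K.card := Finset.card_pos.2 hKne
      omega
    -- the pieces D ∩ C, D ∈ K, form a partition of C
    set Q : Finset (Set Plane) := K.image (fun D => D ∩ C) with hQdef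
    have hinj : Set.InjOn (fun D => D ∩ C) (K : Set (Set Plane)) := by
      intro D hD D' hD' hDD'
      by_contra hne'
      have hdisDD' : Disjoint D D' :=
        hdis (Finset.mem_coe.2 (hKP (Finset.mem_coe.1 hD)))
          (Finset.mem_coe.2 (hKP (Finset.mem_coe.1 hD'))) hne'
      obtain ⟨y, hy⟩ := hKint D (Finset.mem_coe.1 hD)
      have hy' : y ∈ D' ∩ C := by
        have h' : D ∩ C = D' ∩ C := hDD'
        exact h' ▸ hy
      exact Set.disjoint_left.1 hdisDD' hy.1 hy'.1
    have hQpart : IsPartition C Q := by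
      refine ⟨?_, ?_, ?_⟩
      · intro F hF
        obtain ⟨D, hD, hDF⟩ := Finset.mem_image.1 hF
        exact hDF ▸ hKint D hD
      · rw [hQdef, Finset.coe_image]
        apply Set.Subset.antisymm
        · apply Set.sUnion_subset
          intro F hF
          obtain ⟨D, _, hDF⟩ := hF
          exact hDF ▸ Set.inter_subset_right
        · intro x hx
          obtain ⟨D, hD, hxD⟩ := hCsub hx
          exact ⟨D ∩ C, ⟨D, hD, rfl⟩, hxD, hx⟩
      · rw [hQdef, Finset.coe_image]
        intro F hF F' hF' hFF'
        obtain ⟨D, hD, hDF⟩ := hF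
        obtain ⟨D', hD', hDF'⟩ := hF'
        have hDD' : D ≠ D' := by
          intro h
          exact hFF' (by rw [← hDF, ← hDF', h])
        have : Disjoint D D' :=
          hdis (Finset.mem_coe.2 (hKP (Finset.mem_coe.1 hD)))
            (Finset.mem_coe.2 (hKP (Finset.mem_coe.1 hD'))) hDD'
        rw [← hDF, ← hDF']
        exact (this.mono Set.inter_subset_left Set.inter_subset_left)
    have hQcard : Q.card = K.card := Finset.card_image_of_injOn hinj
    have hQsum : ∑ F ∈ Q, perim F = ∑ D ∈ K, perim (D ∩ C) :=
      Finset.sum_image fun D hD D' hD' h =>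
        hinj (Finset.mem_coe.2 hD) (Finset.mem_coe.2 hD') h
    -- indivisibility of C
    have hindiv := hCind.2 Q hQpart
    have hcost1 : cost η ({C} : Finset (Set Plane)) = η * 1 + perim C := by
      rw [cost]; simp
    have hcostQ : cost η Q = η * K.card + ∑ D ∈ K, perim (D ∩ C) := by
      rw [cost, hQcard, hQsum]
    rw [hcost1, hcostQ] at hindiv
    -- perimeter superadditivity
    have hkey := perim_key C hCf K hKfin hKint hKne
    -- conclude the cheap-merge bound and contradict maximality
    refine no_cheap_merge hmax K hKP hK2 ?_
    linarith
  obtain ⟨E, hKE⟩ := Finset.card_eq_one.1 hK1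
  have hEK : E ∈ K := hKE ▸ Finset.mem_singleton_self E
  refine ⟨E, hKP hEK, ?_, ?_⟩
  · intro x hx
    obtain ⟨D, hD, hxD⟩ := hCsub hx
    have : D ∈ K := Finset.mem_coe.1 hD
    rw [hKE, Finset.mem_singleton] at this
    exact this ▸ hxD
  · intro F hF hFC
    have : F ∈ K := Finset.mem_filter.2 ⟨hF, hFC⟩
    rw [hKE, Finset.mem_singleton] at this
    exact this

/-- second part of Lemma 5: every cluster of the maximal optimal
partition of `A` is either a cluster of some `𝒞ᵢ` or intersects every `Aᵢ`. -/
theorem big_cluster_property_dichotomy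
    (η : ℝ) (hη : 0 < η)
    (ι : Type) [Fintype ι] [Nonempty ι]
    (A : ι → Set Plane) (hfin : ∀ i, (A i).Finite)
    (Atot : Set Plane) (hAtot : Atot = ⋃ i, A i)
    (hcompl : Atot = ⋃ i, Atot \ A i)
    (𝒞 : ι → Finset (Set Plane))
    (h𝒞 : ∀ i, IsMaximalOptimal η (Atot \ A i) (𝒞 i))
    (𝒞tot : Finset (Set Plane)) (h𝒞tot : IsMaximalOptimal η Atot 𝒞tot) :
    ∀ C ∈ 𝒞tot, (∃ i : ι, C ∈ 𝒞 i) ∨ (∀ i : ι, (C ∩ A i).Nonempty) := by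
  intro C hC
  by_cases hall : ∀ i : ι, (C ∩ A i).Nonempty
  · exact Or.inr hall
  left
  push_neg at hall
  obtain ⟨i, hi⟩ := hall
  have hAfin : Atot.Finite := by
    rw [hAtot]; exact Set.finite_iUnion hfin
  have hBfin : (Atot \ A i).Finite := hAfin.subset Set.diff_subset
  have hCne : C.Nonempty := h𝒞tot.1.1.1 C hC
  have hCA : C ⊆ Atot := mem_subset_of_partition h𝒞tot.1.1 hC
  have hCB : C ⊆ Atot \ A i := by
    intro x hx
    refine ⟨hCA hx, fun hxA => ?_⟩
    have : x ∈ C ∩ A i := ⟨hx, hxA⟩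
    rw [hi] at this
    exact this
  have hCind : Indivisible η C := indivisible_of_mem_opt h𝒞tot.1 hC
  obtain ⟨D, hD, hCD, _⟩ := absorb (h𝒞 i) hBfin hCne hCB hCind
  have hDne : D.Nonempty := (h𝒞 i).1.1.1 D hD
  have hDB : D ⊆ Atot \ A i := mem_subset_of_partition (h𝒞 i).1.1 hD
  have hDA : D ⊆ Atot := hDB.trans Set.diff_subset
  have hDind : Indivisible η D := indivisible_of_mem_opt (h𝒞 i).1 hD
  obtain ⟨E, hE, hDE, huniq⟩ := absorb h𝒞tot hAfin hDne hDA hDind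
  have hCE : C = E := by
    apply huniq C hC
    obtain ⟨x, hx⟩ := hCne
    exact ⟨x, hx, hCD hx⟩
  have hDC : D ⊆ C := hCE ▸ hDE
  have : C = D := Set.Subset.antisymm hCD hDC
  exact ⟨i, this ▸ hD⟩


end
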